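/- Under the same assumptions, if the diagram D : D → F-Coalg is full (as a functor) and each Di has Fil-presentable carrier, then each colimit injection π_i : (X_i, x_i) → (A, α) is the unique coalgebra morphism from (X_i, x_i) to (A, α). -/

import Mathlib

open CategoryTheory CategoryTheory.Limits Opposite

universe u

variable {𝒞 : Type u} [Category.{u} 𝒞]

/-- An object `X` is `Fil`-presentable if its hom-functor preserves colimits of all
diagrams whose scheme lies in `Fil`. -/
def FilPresentable (Fil : Set Cat.{u, u}) (X : 𝒞) : Prop :=
  ∀ J ∈ Fil, ∀ D : J ⥤ 𝒞, Nonempty (PreservesColimit D (coyoneda.obj (op X)))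

/-- The canonical slice category `𝒮/X` of arrows into `X` with domain in `𝒮`. -/
abbrev SliceCat (𝒮 : Set 𝒞) (X : 𝒞) : Type u :=
  ObjectProperty.FullSubcategory (fun f : Over X => f.left ∈ 𝒮)

/-- The canonical diagram `𝒮/X ⥤ 𝒞`, `(S, f) ↦ S`. -/
abbrev canDiag (𝒮 : Set 𝒞) (X : 𝒞) : SliceCat 𝒮 X ⥤ 𝒞 :=
  ObjectProperty.ι _ ⋙ Over.forget X

/-- The canonical cocone over the canonical diagram, with tip `X`. -/
@[simps]
def canCocone (𝒮 : Set 𝒞) (X : 𝒞) : Cocone (canDiag 𝒮 X) where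
  pt := X
  ι := { app := fun f => f.obj.hom
         naturality := fun f g h => by simp [Over.w ((ObjectProperty.ι _).map h)] }

/-- A witness that `𝒞` is `Fil`-accessible: a set `Cp` of `Fil`-presentable objects
such that each canonical slice lies in `Fil` and each object is the colimit of its
canonical diagram. -/
structure FilAccessibleData (Fil : Set Cat.{u, u}) (𝒞 : Type u) [Category.{u} 𝒞] where
  Cp : Set 𝒞
  presentable : ∀ S ∈ Cp, FilPresentable Fil S
  sliceInFil : ∀ X : 𝒞, Cat.of (SliceCat Cp X) ∈ Fil
  canColim : ∀ X : 𝒞, Nonempty (IsColimit (canCocone Cp X))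

/-- If moreover the diagram `D : J ⥤ F-Coalg` is full and each `D i` has
`Fil`-presentable carrier, then each colimit injection `π_i` is the unique coalgebra
morphism from `D i` to the colimit coalgebra `(A, α)`. -/
theorem unique_colimit_injection
    (Fil : Set Cat.{u, u}) (hFil : ∀ J ∈ Fil, IsFiltered J)
    (acc : FilAccessibleData Fil 𝒞) (F : 𝒞 ⥤ 𝒞)
    (J : Cat.{u, u}) (hJ : J ∈ Fil)
    (D : J ⥤ Endofunctor.Coalgebra F) (hfull : D.Full)
    (hpres : ∀ i : J, FilPresentable Fil (D.obj i).V)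
    (cc : Cocone D)
    (hcreate : IsColimit ((Endofunctor.Coalgebra.forget F).mapCocone cc))
    (hFpres : IsColimit (F.mapCocone ((Endofunctor.Coalgebra.forget F).mapCocone cc)))
    (i : J) (h : D.obj i ⟶ cc.pt) :
    h = cc.ι.app i := by
  haveI : IsFiltered J := hFil J hJ
  set X := (D.obj i).V
  set Vc := (Endofunctor.Coalgebra.forget F).mapCocone cc with hVc
  -- Step 1: factor h.f through some colimit leg
  haveI P1 := (hpres i J hJ (D ⋙ Endofunctor.Coalgebra.forget F)).some
  have L1 : IsColimit ((coyoneda.obj (op X)).mapCocone Vc) :=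
    isColimitOfPreserves (coyoneda.obj (op X)) hcreate
  obtain ⟨k, (u : X ⟶ (D.obj k).V), hu⟩ := Types.jointly_surjective_of_isColimit L1 h.f
  have hu' : u ≫ (cc.ι.app k).f = h.f := hu
  -- Step 2: the two candidates agree after composing with F of a leg
  haveI P2 := (hpres i J hJ ((D ⋙ Endofunctor.Coalgebra.forget F) ⋙ F)).some
  have L2 : IsColimit ((coyoneda.obj (op X)).mapCocone (F.mapCocone Vc)) :=
    isColimitOfPreserves (coyoneda.obj (op X)) hFpres
  have key : ((coyoneda.obj (op X)).mapCocone (F.mapCocone Vc)).ι.app k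
        (u ≫ (D.obj k).str) =
      ((coyoneda.obj (op X)).mapCocone (F.mapCocone Vc)).ι.app k
        ((D.obj i).str ≫ F.map u) := by
    have h1 : (D.obj k).str ≫ F.map (cc.ι.app k).f = (cc.ι.app k).f ≫ cc.pt.str :=
      (cc.ι.app k).h
    have h2 : (D.obj i).str ≫ F.map h.f = h.f ≫ cc.pt.str := h.h
    show (u ≫ (D.obj k).str) ≫ F.map ((cc.ι.app k).f) =
      ((D.obj i).str ≫ F.map u) ≫ F.map ((cc.ι.app k).f)
    calc (u ≫ (D.obj k).str) ≫ F.map ((cc.ι.app k).f)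
        = u ≫ ((cc.ι.app k).f ≫ cc.pt.str) := by rw [Category.assoc, h1]
      _ = h.f ≫ cc.pt.str := by rw [← Category.assoc, hu']
      _ = (D.obj i).str ≫ F.map h.f := h2.symm
      _ = (D.obj i).str ≫ F.map (u ≫ (cc.ι.app k).f) := by rw [hu']
      _ = ((D.obj i).str ≫ F.map u) ≫ F.map ((cc.ι.app k).f) := by
          rw [F.map_comp, Category.assoc]
  rw [Types.FilteredColimit.isColimit_eq_iff _ L2] at key
  obtain ⟨l, f, g, hfg⟩ := key
  dsimp at hfg
  change (u ≫ (D.obj k).str) ≫ F.map (D.map f).f =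
    ((D.obj i).str ≫ F.map u) ≫ F.map (D.map g).f at hfg
  -- coequalize f and g
  obtain ⟨m, c, hco⟩ : ∃ (m : J) (c : l ⟶ m), f ≫ c = g ≫ c :=
    ⟨IsFiltered.coeq f g, IsFiltered.coeqHom f g, IsFiltered.coeq_condition f g⟩
  let t : k ⟶ m := f ≫ c
  have hfg' : (u ≫ (D.obj k).str) ≫ F.map ((D.map t).f) =
      ((D.obj i).str ≫ F.map u) ≫ F.map ((D.map t).f) := by
    have e1 : (D.map t).f = (D.map f).f ≫ (D.map c).f := by
      show (D.map (f ≫ c)).f = _; rw [D.map_comp]; rfl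
    have e2 : (D.map t).f = (D.map g).f ≫ (D.map c).f := by
      show (D.map (f ≫ c)).f = _; rw [hco, D.map_comp]; rfl
    conv_lhs => rw [e1]
    conv_rhs => rw [e2]
    rw [F.map_comp, F.map_comp, ← Category.assoc, ← Category.assoc, hfg]
  -- v is a coalgebra morphism
  set v : X ⟶ (D.obj m).V := u ≫ (D.map t).f with hv
  have hvcoalg : (D.obj i).str ≫ F.map v = v ≫ (D.obj m).str := by
    have hk := (D.map t).h
    rw [hv, F.map_comp, ← Category.assoc, ← hfg', Category.assoc, Category.assoc, hk,
      ← Category.assoc]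
  obtain ⟨g0, hg0⟩ := hfull.map_surjective
    (⟨v, hvcoalg⟩ : D.obj i ⟶ D.obj m)
  -- conclude
  apply Endofunctor.Coalgebra.ext
  have hw : D.map g0 ≫ cc.ι.app m = cc.ι.app i := cc.w g0
  have hw' : (D.map t).f ≫ (cc.ι.app m).f = (cc.ι.app k).f := by
    have := cc.w t
    rw [← this]; rfl
  calc h.f = u ≫ (cc.ι.app k).f := hu'.symm
    _ = v ≫ (cc.ι.app m).f := by rw [hv, Category.assoc, hw']
    _ = (D.map g0).f ≫ (cc.ι.app m).f := by rw [hg0]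
    _ = (cc.ι.app i).f := by rw [← hw]; rfl
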